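/- Let G be a bipartite graph of order n ≥ 6 with a unique minimum dominating set {x, y} where x and y lie in different partite sets and are adjacent. Then the number of edges of G is at most n − 1 + ⌈(n−2)/2⌉·⌊(n−2)/2⌋ − 2(n−2)/3, and in particular at most n(n−2)/4 if n is even and at most (n−1)²/4 if n is odd. -/

import Mathlib

private lemma amgm_aux (p q : ℕ) : 4 * (p * q) ≤ (p + q) * (p + q) := by
  have h : (4 : ℤ) * ((p : ℤ) * (q : ℤ)) ≤ ((p : ℤ) + q) * ((p : ℤ) + q) := by
    nlinarith [sq_nonneg ((p : ℤ) - q)]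
  exact_mod_cast h

def IsDomSet {V : Type*} (G : SimpleGraph V) (D : Finset V) : Prop :=
  ∀ v, v ∉ D → ∃ u ∈ D, G.Adj u v

def IsUMDS {V : Type*} (G : SimpleGraph V) (D : Finset V) : Prop :=
  IsDomSet G D ∧ (∀ D', IsDomSet G D' → D.card ≤ D'.card) ∧
    (∀ D', IsDomSet G D' → D'.card = D.card → D' = D)

theorem stmt10 {V : Type*} [Fintype V] [DecidableEq V] (G : SimpleGraph V) (n : ℕ)
    (hn : Fintype.card V = n) (h6 : 6 ≤ n)
    (hiso : ∀ v : V, ∃ u, G.Adj u v)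
    (c : V → Bool) (hbip : ∀ u v : V, G.Adj u v → c u ≠ c v)
    (x y : V) (hside : c x ≠ c y) (hadj : G.Adj x y)
    (hD : IsUMDS G {x, y}) :
    (G.edgeSet.ncard : ℚ) ≤
        ((n : ℚ) - 1) + (((n - 1) / 2 : ℕ) : ℚ) * (((n - 2) / 2 : ℕ) : ℚ)
          - 2 * ((n : ℚ) - 2) / 3 ∧
      (Even n → G.edgeSet.ncard ≤ n * (n - 2) / 4) ∧
      (Odd n → G.edgeSet.ncard ≤ (n - 1) ^ 2 / 4) := by
  classical
  obtain ⟨hdom, hmin, huniq⟩ := hD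
  have hxy : x ≠ y := fun h => hside (h ▸ rfl)
  have hbool : ∀ b : Bool, b ≠ c x → b = c y := by
    intro b h
    revert h hside
    cases b <;> cases (c x) <;> cases (c y) <;> simp
  have hboolx : ∀ b : Bool, b ≠ c y → b = c x := by
    intro b h
    revert h hside
    cases b <;> cases (c x) <;> cases (c y) <;> simp
  have hcard2 : ({x, y} : Finset V).card = 2 := by
    rw [Finset.card_insert_of_notMem (by simp [hxy]), Finset.card_singleton]
  -- x is adjacent to everything on y's side, y to everything on x's side
  have hxall : ∀ v, c v = c y → G.Adj x v := by
    intro v hv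
    by_cases hvy : v = y
    · exact hvy ▸ hadj
    · have hvx : v ≠ x := fun h => hside (by rw [← h, hv])
      obtain ⟨u, hu, hadj'⟩ := hdom v (by simp [hvx, hvy])
      rcases Finset.mem_insert.mp hu with h | h
      · exact h ▸ hadj'
      · exfalso
        have h2 := hbip u v hadj'
        rw [Finset.mem_singleton.mp h, hv] at h2
        exact h2 rfl
  have hyall : ∀ v, c v = c x → G.Adj y v := by
    intro v hv
    by_cases hvx : v = x
    · exact hvx ▸ hadj.symm
    · have hvy : v ≠ y := fun h => hside (by rw [← h, hv])
      obtain ⟨u, hu, hadj'⟩ := hdom v (by simp [hvx, hvy])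
      rcases Finset.mem_insert.mp hu with h | h
      · exfalso
        have h2 := hbip u v hadj'
        rw [h, hv] at h2
        exact h2 rfl
      · exact (Finset.mem_singleton.mp h) ▸ hadj'
  -- the two sides minus {x, y}
  set A' : Finset V := Finset.univ.filter (fun v => c v = c x ∧ v ≠ x) with hA'def
  set B' : Finset V := Finset.univ.filter (fun v => c v = c y ∧ v ≠ y) with hB'def
  have hA'ne : A'.Nonempty := by
    by_contra h
    rw [Finset.not_nonempty_iff_eq_empty] at h
    have hall : ∀ v, c v = c x → v = x := by
      intro v hv
      by_contra hne
      have : v ∈ A' := by simp [hA'def, hv, hne]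
      simp [h] at this
    have hd1 : IsDomSet G {x} := by
      intro v hv
      rw [Finset.mem_singleton] at hv
      refine ⟨x, Finset.mem_singleton_self x, ?_⟩
      by_cases hc : c v = c x
      · exact absurd (hall v hc) hv
      · exact hxall v (hbool _ hc)
    have := hmin _ hd1
    rw [hcard2, Finset.card_singleton] at this
    omega
  have hB'ne : B'.Nonempty := by
    by_contra h
    rw [Finset.not_nonempty_iff_eq_empty] at h
    have hall : ∀ v, c v = c y → v = y := by
      intro v hv
      by_contra hne
      have : v ∈ B' := by simp [hB'def, hv, hne]
      simp [h] at this
    have hd1 : IsDomSet G {y} := by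
      intro v hv
      rw [Finset.mem_singleton] at hv
      refine ⟨y, Finset.mem_singleton_self y, ?_⟩
      by_cases hc : c v = c y
      · exact absurd (hall v hc) hv
      · exact hyall v (hboolx _ hc)
    have := hmin _ hd1
    rw [hcard2, Finset.card_singleton] at this
    omega
  -- every vertex of B' has a non-neighbour in A', and vice versa
  have hFbex : ∀ b ∈ B', ∃ a ∈ A', ¬ G.Adj a b := by
    intro b hb
    rw [hB'def, Finset.mem_filter] at hb
    by_contra hcon
    push_neg at hcon
    have hbx : b ≠ x := fun h => hside (by rw [← hb.2.1, h])
    have hdomxb : IsDomSet G {x, b} := by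
      intro v hv
      simp only [Finset.mem_insert, Finset.mem_singleton, not_or] at hv
      by_cases hc : c v = c x
      · refine ⟨b, by simp, ?_⟩
        exact (hcon v (by simp [hA'def, hc, hv.1])).symm
      · exact ⟨x, by simp, hxall v (hbool _ hc)⟩
    have hcxb : ({x, b} : Finset V).card = 2 := by
      rw [Finset.card_insert_of_notMem (by simp [Ne.symm hbx]), Finset.card_singleton]
    have heq := huniq _ hdomxb (by rw [hcxb, hcard2])
    have : b ∈ ({x, y} : Finset V) := heq ▸ (by simp : b ∈ ({x, b} : Finset V))
    rcases Finset.mem_insert.mp this with h | h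
    · exact hbx h
    · exact hb.2.2 (Finset.mem_singleton.mp h)
  have hFaex : ∀ a ∈ A', ∃ b ∈ B', ¬ G.Adj a b := by
    intro a ha
    rw [hA'def, Finset.mem_filter] at ha
    by_contra hcon
    push_neg at hcon
    have hay : a ≠ y := fun h => hside (by rw [← ha.2.1, h])
    have hdomay : IsDomSet G {a, y} := by
      intro v hv
      simp only [Finset.mem_insert, Finset.mem_singleton, not_or] at hv
      by_cases hc : c v = c y
      · refine ⟨a, by simp, ?_⟩
        exact hcon v (by simp [hB'def, hc, hv.2])
      · exact ⟨y, by simp, hyall v (hboolx _ hc)⟩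
    have hcay : ({a, y} : Finset V).card = 2 := by
      rw [Finset.card_insert_of_notMem (by simp [hay]), Finset.card_singleton]
    have heq := huniq _ hdomay (by rw [hcay, hcard2])
    have : a ∈ ({x, y} : Finset V) := heq ▸ (by simp : a ∈ ({a, y} : Finset V))
    rcases Finset.mem_insert.mp this with h | h
    · exact ha.2.2 h
    · exact hay (Finset.mem_singleton.mp h)
  -- no "isolated non-edge pair"
  have hK2 : ∀ a ∈ A', ∀ b ∈ B', ¬ G.Adj a b →
      (∀ b' ∈ B', b' ≠ b → G.Adj a b') → (∀ a' ∈ A', a' ≠ a → G.Adj a' b) → False := by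
    intro a ha b hb hnadj hall1 hall2
    rw [hA'def, Finset.mem_filter] at ha
    rw [hB'def, Finset.mem_filter] at hb
    have hab : a ≠ b := fun h => hside (by rw [← ha.2.1, h, hb.2.1])
    have hdomab : IsDomSet G {a, b} := by
      intro v hv
      simp only [Finset.mem_insert, Finset.mem_singleton, not_or] at hv
      by_cases hc : c v = c x
      · by_cases hvx : v = x
        · exact ⟨b, by simp, (hvx ▸ (hxall b hb.2.1)).symm⟩
        · exact ⟨b, by simp, (hall2 v (by simp [hA'def, hc, hvx]) hv.1).symm⟩
      · have hcv : c v = c y := hbool _ hc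
        by_cases hvy : v = y
        · exact ⟨a, by simp, (hvy ▸ (hyall a ha.2.1)).symm⟩
        · exact ⟨a, by simp, hall1 v (by simp [hB'def, hcv, hvy]) hv.2⟩
    have hcardab : ({a, b} : Finset V).card = 2 := by
      rw [Finset.card_insert_of_notMem (by simp [hab]), Finset.card_singleton]
    have heq := huniq _ hdomab (by rw [hcardab, hcard2])
    have hamem : a ∈ ({x, y} : Finset V) := heq ▸ (by simp : a ∈ ({a, b} : Finset V))
    rcases Finset.mem_insert.mp hamem with h | h
    · exact ha.2.2 h
    · exact hside (by rw [← ha.2.1, Finset.mem_singleton.mp h])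
  -- cardinalities
  set p := A'.card with hpdef
  set q := B'.card with hqdef
  have hp1 : 1 ≤ p := Finset.card_pos.mpr hA'ne
  have hq1 : 1 ≤ q := Finset.card_pos.mpr hB'ne
  set Afull : Finset V := Finset.univ.filter (fun v => c v = c x) with hAfdef
  set Bfull : Finset V := Finset.univ.filter (fun v => c v = c y) with hBfdef
  have hAfcard : Afull.card = p + 1 := by
    have h3 : A' = Afull.erase x := by
      ext v
      simp only [hA'def, hAfdef, Finset.mem_filter, Finset.mem_erase, Finset.mem_univ, true_and]
      tauto
    have hxmem : x ∈ Afull := by simp [hAfdef]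
    have h5 := Finset.card_erase_of_mem hxmem
    have h6' : 1 ≤ Afull.card := Finset.card_pos.mpr ⟨x, hxmem⟩
    rw [hpdef, h3, h5]
    omega
  have hBfcard : Bfull.card = q + 1 := by
    have h3 : B' = Bfull.erase y := by
      ext v
      simp only [hB'def, hBfdef, Finset.mem_filter, Finset.mem_erase, Finset.mem_univ, true_and]
      tauto
    have hymem : y ∈ Bfull := by simp [hBfdef]
    have h5 := Finset.card_erase_of_mem hymem
    have h6' : 1 ≤ Bfull.card := Finset.card_pos.mpr ⟨y, hymem⟩
    rw [hqdef, h3, h5]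
    omega
  have hpqn : p + q + 2 = n := by
    have h1 : (Finset.univ.filter (fun v => c v = c x)).card
        + (Finset.univ.filter (fun v => ¬ (c v = c x))).card = Fintype.card V := by
      rw [← Finset.card_univ]
      exact Finset.card_filter_add_card_filter_not _
    have h2 : Finset.univ.filter (fun v => ¬ (c v = c x)) = Bfull := by
      ext v
      simp only [hBfdef, Finset.mem_filter, Finset.mem_univ, true_and]
      constructor
      · exact fun h => hbool _ h
      · intro h hc
        exact hside (by rw [← hc, h])
    rw [h2] at h1
    rw [← hAfdef] at h1
    rw [hAfcard, hBfcard, hn] at h1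
    omega
  -- edge count via ordered pairs
  have hmdef : G.edgeSet.ncard = G.edgeFinset.card := by
    rw [← SimpleGraph.coe_edgeFinset, Set.ncard_coe_finset]
  set m := G.edgeFinset.card with hmm
  set P : Finset (V × V) :=
    Finset.univ.filter (fun e => G.Adj e.1 e.2 ∧ c e.1 = c x) with hPdef
  have hmP : m ≤ P.card := by
    show G.edgeFinset.card ≤ P.card
    apply Finset.card_le_card_of_surjOn (s := P) (t := G.edgeFinset) (fun e : V × V => s(e.1, e.2))
    intro e he
    rw [Finset.mem_coe, SimpleGraph.mem_edgeFinset] at he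
    induction e using Sym2.ind with
    | _ u v =>
      rw [SimpleGraph.mem_edgeSet] at he
      by_cases hc : c u = c x
      · exact ⟨(u, v), by simp [hPdef, he, hc], rfl⟩
      · have hcu : c u = c y := hbool _ hc
        have hcv : c v = c x := by
          apply hboolx
          intro h
          exact (hbip u v he) (by rw [hcu, h])
        exact ⟨(v, u), by simp [hPdef, he.symm, hcv], Sym2.eq_swap⟩
  set P1 : Finset (V × V) := ({x} : Finset V) ×ˢ Bfull with hP1def
  set P2 : Finset (V × V) := A' ×ˢ ({y} : Finset V) with hP2def
  set P3 : Finset (V × V) := (A' ×ˢ B').filter (fun e => G.Adj e.1 e.2) with hP3def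
  have hPsub : P ⊆ P1 ∪ P2 ∪ P3 := by
    intro e he
    rw [hPdef, Finset.mem_filter] at he
    obtain ⟨-, hadje, hce⟩ := he
    have hce2 : c e.2 = c y := by
      apply hbool
      intro h
      exact (hbip _ _ hadje) (hce.trans h.symm)
    rw [Finset.mem_union, Finset.mem_union]
    by_cases h1 : e.1 = x
    · left; left
      rw [hP1def, Finset.mem_product]
      simp [h1, hBfdef, hce2]
    · by_cases h2 : e.2 = y
      · left; right
        rw [hP2def, Finset.mem_product]
        simp [h2, hA'def, hce, h1]
      · right
        rw [hP3def, Finset.mem_filter, Finset.mem_product]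
        refine ⟨⟨by simp [hA'def, hce, h1], by simp [hB'def, hce2, h2]⟩, hadje⟩
  set t := P3.card with htdef
  have hPcard : P.card ≤ (q + 1) + p + t := by
    have h1 : P.card ≤ (P1 ∪ P2 ∪ P3).card := Finset.card_le_card hPsub
    have h2 : (P1 ∪ P2 ∪ P3).card ≤ P1.card + P2.card + P3.card :=
      le_trans (Finset.card_union_le _ _)
        (by exact add_le_add_left (Finset.card_union_le _ _) _)
    have h3 : P1.card = q + 1 := by
      rw [hP1def, Finset.card_product, Finset.card_singleton, one_mul, hBfcard]
    have h4 : P2.card = p := by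
      rw [hP2def, Finset.card_product, Finset.card_singleton, mul_one]
    omega
  set H : Finset (V × V) := (A' ×ˢ B').filter (fun e => ¬ G.Adj e.1 e.2) with hHdef
  have hth : t + H.card = p * q := by
    have h1 := Finset.card_filter_add_card_filter_not
      (s := A' ×ˢ B') (p := fun e : V × V => G.Adj e.1 e.2)
    rw [Finset.card_product] at h1
    exact h1
  -- fiberwise decompositions of H
  set Fa : V → Finset V := fun a => B'.filter (fun b => ¬ G.Adj a b) with hFadef
  set Fb : V → Finset V := fun b => A'.filter (fun a => ¬ G.Adj a b) with hFbdef
  have hHmemA : ∀ e ∈ H, e.1 ∈ A' := by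
    intro e he
    rw [hHdef, Finset.mem_filter, Finset.mem_product] at he
    exact he.1.1
  have hHmemB : ∀ e ∈ H, e.2 ∈ B' := by
    intro e he
    rw [hHdef, Finset.mem_filter, Finset.mem_product] at he
    exact he.1.2
  have hfibA : ∀ a ∈ A', H.filter (fun e => e.1 = a) = {a} ×ˢ Fa a := by
    intro a ha
    ext ⟨u, v⟩
    simp only [hHdef, hFadef, Finset.mem_filter, Finset.mem_product, Finset.mem_singleton]
    constructor
    · rintro ⟨⟨⟨hu, hv⟩, hnadj⟩, h1⟩
      exact ⟨h1, hv, by rwa [h1] at hnadj⟩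
    · rintro ⟨h1, hv, hnadj⟩
      subst h1
      exact ⟨⟨⟨ha, hv⟩, hnadj⟩, rfl⟩
  have hfibB : ∀ b ∈ B', H.filter (fun e => e.2 = b) = (Fb b) ×ˢ {b} := by
    intro b hb
    ext ⟨u, v⟩
    simp only [hHdef, hFbdef, Finset.mem_filter, Finset.mem_product, Finset.mem_singleton]
    constructor
    · rintro ⟨⟨⟨hu, hv⟩, hnadj⟩, h1⟩
      exact ⟨⟨hu, by rwa [h1] at hnadj⟩, h1⟩
    · rintro ⟨⟨hu, hnadj⟩, h1⟩
      subst h1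
      exact ⟨⟨⟨hu, hb⟩, hnadj⟩, rfl⟩
  have hHA : H.card = ∑ a ∈ A', (Fa a).card := by
    rw [Finset.card_eq_sum_card_fiberwise hHmemA]
    apply Finset.sum_congr rfl
    intro a ha
    rw [hfibA a ha, Finset.card_product, Finset.card_singleton, one_mul]
  have hHB : H.card = ∑ b ∈ B', (Fb b).card := by
    rw [Finset.card_eq_sum_card_fiberwise hHmemB]
    apply Finset.sum_congr rfl
    intro b hb
    rw [hfibB b hb, Finset.card_product, Finset.card_singleton, mul_one]
  have hFa1 : ∀ a ∈ A', 1 ≤ (Fa a).card := by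
    intro a ha
    obtain ⟨b, hb, hnadj⟩ := hFaex a ha
    exact Finset.card_pos.mpr ⟨b, by simp [hFadef, hb, hnadj]⟩
  have hFb1 : ∀ b ∈ B', 1 ≤ (Fb b).card := by
    intro b hb
    obtain ⟨a, ha, hnadj⟩ := hFbex b hb
    exact Finset.card_pos.mpr ⟨a, by simp [hFbdef, ha, hnadj]⟩
  set D1A := A'.filter (fun a => (Fa a).card = 1) with hD1Adef
  set D1B := B'.filter (fun b => (Fb b).card = 1) with hD1Bdef
  have h2p : 2 * p ≤ H.card + D1A.card := by
    have hpt : ∀ a ∈ A', 2 ≤ (Fa a).card + (if (Fa a).card = 1 then 1 else 0) := by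
      intro a ha
      have := hFa1 a ha
      split <;> omega
    calc 2 * p = ∑ _a ∈ A', 2 := by rw [Finset.sum_const, smul_eq_mul, mul_comm]
      _ ≤ ∑ a ∈ A', ((Fa a).card + if (Fa a).card = 1 then 1 else 0) :=
          Finset.sum_le_sum hpt
      _ = (∑ a ∈ A', (Fa a).card) + ∑ a ∈ A', (if (Fa a).card = 1 then 1 else 0) :=
          Finset.sum_add_distrib
      _ = H.card + D1A.card := by
          rw [← hHA]
          congr 1
          exact (Finset.card_filter _ _).symm
  have h2q : 2 * q ≤ H.card + D1B.card := by
    have hpt : ∀ b ∈ B', 2 ≤ (Fb b).card + (if (Fb b).card = 1 then 1 else 0) := by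
      intro b hb
      have := hFb1 b hb
      split <;> omega
    calc 2 * q = ∑ _b ∈ B', 2 := by rw [Finset.sum_const, smul_eq_mul, mul_comm]
      _ ≤ ∑ b ∈ B', ((Fb b).card + if (Fb b).card = 1 then 1 else 0) :=
          Finset.sum_le_sum hpt
      _ = (∑ b ∈ B', (Fb b).card) + ∑ b ∈ B', (if (Fb b).card = 1 then 1 else 0) :=
          Finset.sum_add_distrib
      _ = H.card + D1B.card := by
          rw [← hHB]
          congr 1
          exact (Finset.card_filter _ _).symm
  -- the sets of "degree-one ends" inject disjointly into H
  set E1 := H.filter (fun e => (Fa e.1).card = 1) with hE1def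
  set E2 := H.filter (fun e => (Fb e.2).card = 1) with hE2def
  have hE1card : E1.card = D1A.card := by
    have hmem : ∀ e ∈ E1, e.1 ∈ A' := fun e he => hHmemA e (Finset.mem_filter.mp he).1
    rw [Finset.card_eq_sum_card_fiberwise hmem, hD1Adef, Finset.card_filter]
    apply Finset.sum_congr rfl
    intro a ha
    by_cases hca : (Fa a).card = 1
    · rw [if_pos hca]
      have heq : E1.filter (fun e => e.1 = a) = {a} ×ˢ Fa a := by
        rw [hE1def, Finset.filter_filter]
        rw [← hfibA a ha]
        apply Finset.filter_congr
        intro e he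
        constructor
        · rintro ⟨_, h⟩; exact h
        · intro h; exact ⟨by rwa [h], h⟩
      rw [heq, Finset.card_product, Finset.card_singleton, one_mul, hca]
    · rw [if_neg hca, Finset.card_eq_zero]
      rw [Finset.eq_empty_iff_forall_notMem]
      intro e he
      rw [Finset.mem_filter, hE1def, Finset.mem_filter] at he
      exact hca (by rw [← he.2]; exact he.1.2)
  have hE2card : E2.card = D1B.card := by
    have hmem : ∀ e ∈ E2, e.2 ∈ B' := fun e he => hHmemB e (Finset.mem_filter.mp he).1
    rw [Finset.card_eq_sum_card_fiberwise hmem, hD1Bdef, Finset.card_filter]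
    apply Finset.sum_congr rfl
    intro b hb
    by_cases hcb : (Fb b).card = 1
    · rw [if_pos hcb]
      have heq : E2.filter (fun e => e.2 = b) = (Fb b) ×ˢ {b} := by
        rw [hE2def, Finset.filter_filter]
        rw [← hfibB b hb]
        apply Finset.filter_congr
        intro e he
        constructor
        · rintro ⟨_, h⟩; exact h
        · intro h; exact ⟨by rwa [h], h⟩
      rw [heq, Finset.card_product, Finset.card_singleton, mul_one, hcb]
    · rw [if_neg hcb, Finset.card_eq_zero]
      rw [Finset.eq_empty_iff_forall_notMem]
      intro e he
      rw [Finset.mem_filter, hE2def, Finset.mem_filter] at he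
      exact hcb (by rw [← he.2]; exact he.1.2)
  have hdisj : Disjoint E1 E2 := by
    rw [Finset.disjoint_left]
    rintro ⟨a, b⟩ h1 h2
    rw [hE1def, Finset.mem_filter] at h1
    rw [hE2def, Finset.mem_filter] at h2
    obtain ⟨haH, hca⟩ := h1
    obtain ⟨-, hcb⟩ := h2
    have hmemprod := haH
    rw [hHdef, Finset.mem_filter, Finset.mem_product] at hmemprod
    obtain ⟨⟨ha, hb⟩, hnadj⟩ := hmemprod
    have hbFa : b ∈ Fa a := by simp [hFadef, hb, hnadj]
    have haFb : a ∈ Fb b := by simp [hFbdef, ha, hnadj]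
    obtain ⟨w, hw⟩ := Finset.card_eq_one.mp hca
    have hwb : w = b := by
      have := hw ▸ hbFa
      exact (Finset.mem_singleton.mp this).symm
    obtain ⟨w', hw'⟩ := Finset.card_eq_one.mp hcb
    have hwa : w' = a := by
      have := hw' ▸ haFb
      exact (Finset.mem_singleton.mp this).symm
    apply hK2 a ha b hb hnadj
    · intro b' hb' hne
      by_contra hnadj'
      have : b' ∈ Fa a := by simp [hFadef, hb', hnadj']
      rw [hw, hwb] at this
      exact hne (Finset.mem_singleton.mp this)
    · intro a' ha' hne
      by_contra hnadj'
      have : a' ∈ Fb b := by simp [hFbdef, ha', hnadj']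
      rw [hw', hwa] at this
      exact hne (Finset.mem_singleton.mp this)
  have hD1H : D1A.card + D1B.card ≤ H.card := by
    rw [← hE1card, ← hE2card, ← Finset.card_union_of_disjoint hdisj]
    exact Finset.card_le_card
      (Finset.union_subset (Finset.filter_subset _ _) (Finset.filter_subset _ _))
  have h3H : 2 * (p + q) ≤ 3 * H.card := by omega
  -- main counting inequality
  have hKmain : 3 * m + 2 * (p + q) ≤ 3 * (p + q + 1) + 3 * (p * q) := by
    have h1 : m ≤ p + q + 1 + t := by omega
    have h2 : 3 * t + 2 * (p + q) ≤ 3 * (p * q) := by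
      calc 3 * t + 2 * (p + q) ≤ 3 * t + 3 * H.card := by omega
        _ = 3 * (t + H.card) := by ring
        _ = 3 * (p * q) := by rw [hth]
    calc 3 * m + 2 * (p + q) ≤ 3 * (p + q + 1 + t) + 2 * (p + q) := by omega
      _ = 3 * (p + q + 1) + (3 * t + 2 * (p + q)) := by ring
      _ ≤ 3 * (p + q + 1) + 3 * (p * q) := by
          exact add_le_add_right h2 _
  clear_value t m q p
  have hAMGM : 4 * (p * q) ≤ (p + q) * (p + q) := amgm_aux p q
  refine ⟨?_, ?_, ?_⟩
  · -- rational bound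
    rw [hmdef]
    have hC : p * q ≤ ((n - 1) / 2) * ((n - 2) / 2) := by
      rcases Nat.even_or_odd (p + q) with ⟨j, hj⟩ | ⟨j, hj⟩
      · have h4 : 4 * (p * q) ≤ 4 * (j * j) := by
          have hxx : (p + q) * (p + q) = 4 * (j * j) := by rw [hj]; ring
          linarith [hAMGM]
        have hle : p * q ≤ j * j := Nat.le_of_mul_le_mul_left h4 (by norm_num)
        have h1 : (n - 1) / 2 = j := by omega
        have h2 : (n - 2) / 2 = j := by omega
        rw [h1, h2]; exact hle
      · have h4 : 4 * (p * q) < 4 * (j * (j + 1) + 1) := by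
          have h5 : (p + q) * (p + q) = 4 * (j * (j + 1)) + 1 := by rw [hj]; ring
          linarith [hAMGM]
        have hle : p * q < j * (j + 1) + 1 := Nat.lt_of_mul_lt_mul_left h4
        have hle' : p * q ≤ j * (j + 1) := Nat.lt_succ_iff.mp hle
        have h1 : (n - 1) / 2 = j + 1 := by omega
        have h2 : (n - 2) / 2 = j := by omega
        rw [h1, h2]
        calc p * q ≤ j * (j + 1) := hle'
          _ = (j + 1) * j := by ring
    have hcastK : 3 * (m : ℚ) + 2 * ((p : ℚ) + (q : ℚ)) ≤
        3 * ((p : ℚ) + (q : ℚ) + 1) + 3 * ((p : ℚ) * (q : ℚ)) := by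
      exact_mod_cast hKmain
    have hcastC : (p : ℚ) * (q : ℚ) ≤
        (((n - 1) / 2 : ℕ) : ℚ) * (((n - 2) / 2 : ℕ) : ℚ) := by
      exact_mod_cast hC
    have hcastn : (p : ℚ) + (q : ℚ) + 2 = (n : ℚ) := by exact_mod_cast hpqn
    linarith
  · -- even case
    intro hEven
    rw [hmdef]
    obtain ⟨k, hk⟩ := hEven
    have hk3 : 3 ≤ k := by omega
    set j := k - 1 with hjdef
    have hj2 : 2 ≤ j := by omega
    have hpqj : p + q = 2 * j := by omega
    have hpqle : p * q ≤ j * j := by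
      have h4 : 4 * (p * q) ≤ 4 * (j * j) := by
        have hxx : (p + q) * (p + q) = 4 * (j * j) := by rw [hpqj]; ring
        linarith [hAMGM]
      exact Nat.le_of_mul_le_mul_left h4 (by norm_num)
    have hdiv : n * (n - 2) / 4 = j * j + j := by
      have h1 : n - 2 = 2 * j := by omega
      have h2 : n = 2 * j + 2 := by omega
      rw [h1, h2]
      have h3 : (2 * j + 2) * (2 * j) = 4 * (j * j + j) := by ring
      rw [h3, Nat.mul_div_cancel_left _ (by norm_num)]
    rw [hdiv]
    by_contra hcon
    push_neg at hcon
    have hcon' : j * j + j + 1 ≤ m := hcon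
    have := hKmain
    rw [hpqj] at this
    linarith
  · -- odd case
    intro hOdd
    rw [hmdef]
    obtain ⟨k, hk⟩ := hOdd
    have hk3 : 3 ≤ k := by omega
    set j := k - 1 with hjdef
    have hj2 : 2 ≤ j := by omega
    have hpqj : p + q = 2 * j + 1 := by omega
    have hpqle : p * q ≤ j * j + j := by
      have h4 : 4 * (p * q) < 4 * (j * j + j + 1) := by
        have h5 : (p + q) * (p + q) = 4 * (j * j + j) + 1 := by rw [hpqj]; ring
        linarith [hAMGM]
      exact Nat.lt_succ_iff.mp (Nat.lt_of_mul_lt_mul_left h4)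
    have hdiv : (n - 1) ^ 2 / 4 = j * j + 2 * j + 1 := by
      have h1 : n - 1 = 2 * j + 2 := by omega
      rw [h1]
      have h3 : (2 * j + 2) ^ 2 = 4 * (j * j + 2 * j + 1) := by ring
      rw [h3, Nat.mul_div_cancel_left _ (by norm_num)]
    rw [hdiv]
    by_contra hcon
    push_neg at hcon
    have hcon' : j * j + 2 * j + 1 + 1 ≤ m := hcon
    have := hKmain
    rw [hpqj] at this
    linarith
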